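/- Theorem 3 (impact of cell width and depth on gradient variance): Let (Ω, 𝔉, P) be a probability space and let F : Ω × (ℝ^d)^n → ℝ be such that F(ω, ·) is differentiable for every ω; let x ∈ ℝ^d and let f_ω and f̂_ω be the widest-cell and narrowest-cell objectives built from F(ω, ·). Fix a deterministic parameter tuple (W^{(1)},…,W^{(n)}) with λ^{(j)} = ‖W^{(j)}‖, write Ŵ^{(k)} = ∏_{j=1}^{k} W^{(j)} for the effective weights, and fix i ∈ {1,…,n}. Assume that for every k ∈ {i,…,n} the random matrix ω ↦ ∂f_ω/∂V^{(k)}(Ŵ^{(1)},…,Ŵ^{(n)}) is integrable with E‖∂f_ω/∂V^{(k)}(Ŵ) − E ∂f_ω/∂V^{(k)}(Ŵ)‖² ≤ (σ^{(k)})². Then the gradient variance of the narrowest cell at (W^{(1)},…,W^{(n)}) satisfies E‖∂f̂_ω/∂W^{(i)} − E ∂f̂_ω/∂W^{(i)}‖² ≤ n Σ_{k=i}^{n} ((∏_{j=1}^{i−1} λ^{(j)}) · (∏_{j=i+1}^{k} λ^{(j)}) · σ^{(k)})². -/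

import Mathlib

/-!
Statement 7 (Theorem 3): impact of cell width and depth on gradient variance.
`‖·‖` is the spectral (ℓ2 operator) norm on real `d × d` matrices (scoped `Matrix.Norms.L2Operator`
instances); expectations are Bochner integrals with respect to the probability measure `μ`.
Indices of the `n` intermediate nodes are `0, …, n-1` (the paper's `W^{(1)}, …, W^{(n)}`
correspond to `W 0, …, W (n-1)`).  The reversed product convention
`∏_{j=a}^{b} W^{(j)} = W^{(b)} ⋯ W^{(a)}` is implemented by `prodRev`; the effective weights
are `Ŵ⁽ᵏ⁾ = prodRev W (Iic k)`; empty matrix products are the identity and empty real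
products are `1`.
-/

open scoped Matrix.Norms.L2Operator

open Matrix MeasureTheory

/-- Reversed (descending-index) product of the matrices `W j`, `j ∈ s`;
the empty product is the identity. -/
noncomputable def prodRev {n d : ℕ} (W : Fin n → Matrix (Fin d) (Fin d) ℝ)
    (s : Finset (Fin n)) : Matrix (Fin d) (Fin d) ℝ :=
  (((s.sort (· ≤ ·)).map W).reverse).prod

/-- `∂g/∂W⁽ⁱ⁾`: the `d × d` matrix whose `(a, b)` entry is the partial derivative of the scalar
function `g` of an `n`-tuple of `d × d` real matrices with respect to the `(a, b)` entry of the
`i`-th matrix argument. -/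
noncomputable def matGrad {n d : ℕ}
    (g : (Fin n → Matrix (Fin d) (Fin d) ℝ) → ℝ)
    (W : Fin n → Matrix (Fin d) (Fin d) ℝ) (i : Fin n) : Matrix (Fin d) (Fin d) ℝ :=
  Matrix.of fun a b => fderiv ℝ g W (Pi.single i (Matrix.single a b 1))


section Aux

theorem norm_transpose' {d : ℕ} (A : Matrix (Fin d) (Fin d) ℝ) : ‖Aᵀ‖ = ‖A‖ := by
  rw [← conjTranspose_eq_transpose_of_trivial]
  exact Matrix.l2_opNorm_conjTranspose A

theorem norm_prodRev_le {n d : ℕ} (hd : 1 ≤ d) (W : Fin n → Matrix (Fin d) (Fin d) ℝ)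
    (s : Finset (Fin n)) : ‖prodRev W s‖ ≤ ∏ j ∈ s, ‖W j‖ := by
  haveI : Nontrivial (Matrix (Fin d) (Fin d) ℝ) := nontrivial_of_ne 0 1 (by
    intro h
    have := congrFun (congrFun h ⟨0, hd⟩) ⟨0, hd⟩
    simp [Matrix.one_apply] at this)
  rw [prodRev]
  refine le_trans (List.norm_prod_le _) (le_of_eq ?_)
  rw [List.map_reverse, List.prod_reverse, List.map_map]
  rw [Finset.prod_eq_multiset_prod]
  rw [← Finset.sort_eq (s := s) (r := (· ≤ ·))]
  rw [Multiset.map_coe, Multiset.prod_coe]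
  rfl

/-- the list whose `W`-product is `prodRev W s` -/
def revSort {n : ℕ} (s : Finset (Fin n)) : List (Fin n) := ((s.sort (· ≤ ·)).reverse)

theorem prodRev_eq {n d : ℕ} (W : Fin n → Matrix (Fin d) (Fin d) ℝ) (s : Finset (Fin n)) :
    prodRev W s = ((revSort s).map W).prod := by
  rw [prodRev, revSort, List.map_reverse]

/-- the CLM `M ↦ M.mulVec x` -/
noncomputable def mulVecCLM {d : ℕ} (x : Fin d → ℝ) :
    Matrix (Fin d) (Fin d) ℝ →L[ℝ] (Fin d → ℝ) :=
  LinearMap.toContinuousLinearMap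
    { toFun := fun M => M.mulVec x
      map_add' := fun A B => Matrix.add_mulVec A B x
      map_smul' := fun c A => (smul_mulVec c A x) }

@[simp] theorem mulVecCLM_apply {d : ℕ} (x : Fin d → ℝ) (M : Matrix (Fin d) (Fin d) ℝ) :
    mulVecCLM x M = M.mulVec x := rfl

noncomputable def Dl {n d : ℕ} : List (Fin n) → (Fin n → Matrix (Fin d) (Fin d) ℝ) →
    ((Fin n → Matrix (Fin d) (Fin d) ℝ) →L[ℝ] Matrix (Fin d) (Fin d) ℝ)
  | [], _ => 0
  | a :: l, W => W a • Dl l W + (ContinuousLinearMap.proj a).smulRight ((l.map W).prod)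

theorem hasFDerivAt_listProd {n d : ℕ} (l : List (Fin n)) (W : Fin n → Matrix (Fin d) (Fin d) ℝ) :
    HasFDerivAt (fun V => ((l.map V).prod)) (Dl l W) W := by
  induction l with
  | nil => simpa [Dl] using (hasFDerivAt_const (1 : Matrix (Fin d) (Fin d) ℝ) W)
  | cons a l ih =>
      have h := HasFDerivAt.mul' ((ContinuousLinearMap.proj a
        (R := ℝ) (φ := fun _ : Fin n => Matrix (Fin d) (Fin d) ℝ)).hasFDerivAt) ih
      refine h.congr_fderiv ?_
      refine ContinuousLinearMap.ext fun V => ?_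
      simp [Dl]

/-- derivative of the `k'`-th intermediate node of the narrowest cell -/
noncomputable def DPhi {n d : ℕ} (x : Fin d → ℝ) (W : Fin n → Matrix (Fin d) (Fin d) ℝ) :
    (Fin n → Matrix (Fin d) (Fin d) ℝ) →L[ℝ] (Fin n → (Fin d → ℝ)) :=
  ContinuousLinearMap.pi fun k' => (mulVecCLM x).comp (Dl (revSort (Finset.Iic k')) W)

theorem hasFDerivAt_Phi {n d : ℕ} (x : Fin d → ℝ) (W : Fin n → Matrix (Fin d) (Fin d) ℝ) :
    HasFDerivAt (fun V (k' : Fin n) => (prodRev V (Finset.Iic k')).mulVec x) (DPhi x W) W := by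
  apply hasFDerivAt_pi.2
  intro k'
  have h1 : HasFDerivAt (fun V : Fin n → Matrix (Fin d) (Fin d) ℝ =>
      (((revSort (Finset.Iic k')).map V).prod)) (Dl (revSort (Finset.Iic k')) W) W :=
    hasFDerivAt_listProd _ W
  have h2 := (mulVecCLM x).hasFDerivAt.comp W h1
  simpa [prodRev_eq, Function.comp] using h2

/-- the inner map of the widest cell, as a CLM -/
noncomputable def PsiCLM (n : ℕ) {d : ℕ} (x : Fin d → ℝ) :
    (Fin n → Matrix (Fin d) (Fin d) ℝ) →L[ℝ] (Fin n → (Fin d → ℝ)) :=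
  ContinuousLinearMap.pi fun k' => (mulVecCLM x).comp (ContinuousLinearMap.proj k')

theorem fderiv_narrow {n d : ℕ} (FF : (Fin n → (Fin d → ℝ)) → ℝ) (hFF : Differentiable ℝ FF)
    (x : Fin d → ℝ) (W : Fin n → Matrix (Fin d) (Fin d) ℝ) :
    fderiv ℝ (fun V => FF fun k' => (prodRev V (Finset.Iic k')).mulVec x) W
      = (fderiv ℝ FF (fun k' => (prodRev W (Finset.Iic k')).mulVec x)).comp (DPhi x W) := by
  exact (((hFF _).hasFDerivAt).comp W (hasFDerivAt_Phi x W)).fderiv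

theorem fderiv_wide {n d : ℕ} (FF : (Fin n → (Fin d → ℝ)) → ℝ) (hFF : Differentiable ℝ FF)
    (x : Fin d → ℝ) (Wh : Fin n → Matrix (Fin d) (Fin d) ℝ) :
    fderiv ℝ (fun V => FF fun k' => (V k').mulVec x) Wh
      = (fderiv ℝ FF (fun k' => (Wh k').mulVec x)).comp (PsiCLM n x) := by
  have h1 : HasFDerivAt (fun V : Fin n → Matrix (Fin d) (Fin d) ℝ =>
      (fun k' => (V k').mulVec x)) (PsiCLM n x) Wh := by
    apply hasFDerivAt_pi.2
    intro k'
    exact (mulVecCLM x).hasFDerivAt.comp Wh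
      ((ContinuousLinearMap.proj k' (R := ℝ)
        (φ := fun _ : Fin n => Matrix (Fin d) (Fin d) ℝ)).hasFDerivAt)
  exact (((hFF _).hasFDerivAt).comp Wh h1).fderiv
theorem Dl_single_not_mem {n d : ℕ} {i : Fin n} (l : List (Fin n)) (hi : i ∉ l)
    (W : Fin n → Matrix (Fin d) (Fin d) ℝ) (E : Matrix (Fin d) (Fin d) ℝ) :
    Dl l W (Pi.single i E) = 0 := by
  induction l with
  | nil => simp [Dl]
  | cons a l ih =>
      simp only [List.mem_cons, not_or] at hi
      simp [Dl, ih hi.2, Pi.single_eq_of_ne (Ne.symm hi.1)]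

theorem Dl_single_split {n d : ℕ} {i : Fin n} (l1 l2 : List (Fin n)) (h1 : i ∉ l1) (h2 : i ∉ l2)
    (W : Fin n → Matrix (Fin d) (Fin d) ℝ) (E : Matrix (Fin d) (Fin d) ℝ) :
    Dl (l1 ++ i :: l2) W (Pi.single i E) = (l1.map W).prod * E * (l2.map W).prod := by
  induction l1 with
  | nil => simp [Dl, Dl_single_not_mem l2 h2 W E]
  | cons a l1 ih =>
      simp only [List.mem_cons, not_or] at h1
      simp [Dl, ih h1.2, mul_assoc, Pi.single_eq_of_ne (Ne.symm h1.1)]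
theorem sort_Iic_split {n : ℕ} {i k : Fin n} (hik : i ≤ k) :
    (Finset.Iic k).sort (· ≤ ·) =
      (Finset.Iio i).sort (· ≤ ·) ++ i :: (Finset.Ioc i k).sort (· ≤ ·) := by
  have hdisj : Disjoint (Finset.Iio i) (insert i (Finset.Ioc i k)) := by
    simp only [Finset.disjoint_left, Finset.mem_Iio, Finset.mem_insert, Finset.mem_Ioc]
    rintro a ha (rfl | ⟨h1, h2⟩)
    · exact lt_irrefl _ ha
    · exact absurd (ha.trans h1) (lt_irrefl _)
  have hunion : (Finset.Iio i).disjUnion (insert i (Finset.Ioc i k)) hdisj = Finset.Iic k := by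
    ext a
    simp only [Finset.mem_disjUnion, Finset.mem_Iio, Finset.mem_insert, Finset.mem_Ioc,
      Finset.mem_Iic]
    constructor
    · rintro (h | rfl | ⟨h1, h2⟩)
      · exact (le_of_lt h).trans hik
      · exact hik
      · exact h2
    · intro h
      rcases lt_trichotomy a i with h' | rfl | h'
      · exact Or.inl h'
      · exact Or.inr (Or.inl rfl)
      · exact Or.inr (Or.inr ⟨h', h⟩)
  -- permutation
  have hperm : List.Perm ((Finset.Iio i).sort (fun a b => a ≤ b) ++ i :: (Finset.Ioc i k).sort (fun a b => a ≤ b))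
      ((Finset.Iic k).sort (fun a b => a ≤ b)) := by
    rw [← Multiset.coe_eq_coe]
    have hi : i ∉ Finset.Ioc i k := by simp
    have : ((Finset.Iic k).sort (· ≤ ·) : Multiset (Fin n)) = (Finset.Iic k).val :=
      Finset.sort_eq _ _
    rw [this, ← hunion]
    show _ = (Finset.Iio i).val + (insert i (Finset.Ioc i k)).val
    rw [Finset.insert_val_of_notMem hi]
    rw [← Multiset.coe_add]
    rw [show ((Finset.sort (Finset.Iio i) (fun a b => a ≤ b) : List (Fin n)) : Multiset (Fin n))
      = (Finset.Iio i).val from Finset.sort_eq _ _]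
    congr 1
    rw [show ((i :: Finset.sort (Finset.Ioc i k) (fun a b => a ≤ b) : List (Fin n)) : Multiset (Fin n))
      = i ::ₘ ((Finset.sort (Finset.Ioc i k) (fun a b => a ≤ b) : List (Fin n)) : Multiset (Fin n)) from rfl]
    rw [show ((Finset.sort (Finset.Ioc i k) (fun a b => a ≤ b) : List (Fin n)) : Multiset (Fin n))
      = (Finset.Ioc i k).val from Finset.sort_eq _ _]
  refine List.Perm.eq_of_pairwise' (Finset.pairwise_sort _ _) ?_ hperm.symm
  refine List.pairwise_append.mpr ⟨Finset.pairwise_sort _ _, ?_, ?_⟩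
  · refine List.pairwise_cons.mpr ⟨fun b hb => ?_, Finset.pairwise_sort _ _⟩
    have := (Finset.mem_sort (α := Fin n) (· ≤ ·)).mp hb
    rw [Finset.mem_Ioc] at this
    exact le_of_lt this.1
  · intro a ha b hb
    have ha' : a < i := by
      have := (Finset.mem_sort (α := Fin n) (· ≤ ·)).mp ha
      rwa [Finset.mem_Iio] at this
    rcases List.mem_cons.mp hb with rfl | hb'
    · exact le_of_lt ha'
    · have := (Finset.mem_sort (α := Fin n) (· ≤ ·)).mp hb'
      rw [Finset.mem_Ioc] at this
      exact le_of_lt (ha'.trans this.1)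

theorem revSort_Iic_split {n : ℕ} {i k : Fin n} (hik : i ≤ k) :
    revSort (Finset.Iic k) = revSort (Finset.Ioc i k) ++ i :: revSort (Finset.Iio i) := by
  simp [revSort, sort_Iic_split hik, List.reverse_append]

theorem hsb {d : ℕ} (x : Fin d → ℝ) (p q u : Fin d) :
    (Matrix.single p q (1:ℝ)).mulVec x u = if p = u then x q else 0 := by
  simp [Matrix.mulVec, dotProduct, Matrix.single, ite_and, Finset.sum_ite_eq]

theorem hABR {d : ℕ} (A R : Matrix (Fin d) (Fin d) ℝ) (a b u v : Fin d) :
    ((A * Matrix.single a b 1 * R : Matrix (Fin d) (Fin d) ℝ)) u v = A u a * R b v := by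
  have h1 : ∀ j, (A * Matrix.single a b 1 : Matrix (Fin d) (Fin d) ℝ) u j
      = if j = b then A u a else 0 := by
    intro j
    rw [Matrix.mul_apply]
    simp [Matrix.single, ite_and, Finset.sum_ite_eq, eq_comm]
  rw [Matrix.mul_apply]
  simp [h1, ite_mul, Finset.sum_ite_eq]

theorem key_entry {d : ℕ} (ψ : (Fin d → ℝ) →ₗ[ℝ] ℝ) (A R : Matrix (Fin d) (Fin d) ℝ)
    (x : Fin d → ℝ) (a b : Fin d) :
    (Aᵀ * (Matrix.of fun p q => ψ ((Matrix.single p q (1:ℝ)).mulVec x)) * Rᵀ) a b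
      = ψ ((A * Matrix.single a b 1 * R).mulVec x) := by
  have hw : (A * Matrix.single a b 1 * R).mulVec x
      = ∑ p, ∑ q, (A p a * R b q) • ((Matrix.single p q (1:ℝ)).mulVec x) := by
    funext u
    simp only [Finset.sum_apply, Pi.smul_apply, hsb, smul_eq_mul, mul_ite, mul_zero]
    rw [Finset.sum_comm]
    simp only [Finset.sum_ite_eq', Finset.mem_univ, if_true]
    simp [Matrix.mulVec, dotProduct, hABR, Finset.mul_sum]
  rw [hw, map_sum]
  simp only [map_sum, LinearMap.map_smul, smul_eq_mul]
  simp only [Matrix.mul_apply, Matrix.transpose_apply, Matrix.of_apply,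
    Finset.sum_mul, Finset.mul_sum]
  rw [Finset.sum_comm]
  congr 1; funext p; congr 1; funext q
  ring

theorem matGrad_narrow {n d : ℕ} (FF : (Fin n → (Fin d → ℝ)) → ℝ) (hFF : Differentiable ℝ FF)
    (x : Fin d → ℝ) (W : Fin n → Matrix (Fin d) (Fin d) ℝ) (i : Fin n) :
    matGrad (fun V => FF fun k' => (prodRev V (Finset.Iic k')).mulVec x) W i
      = ∑ k ∈ Finset.Ici i, (prodRev W (Finset.Ioc i k))ᵀ
          * matGrad (fun V => FF fun k' => (V k').mulVec x) (fun k' => prodRev W (Finset.Iic k')) k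
          * (prodRev W (Finset.Iio i))ᵀ := by
  have hG : ∀ (k : Fin n), matGrad (fun V => FF fun k' => (V k').mulVec x)
      (fun k' => prodRev W (Finset.Iic k')) k
      = Matrix.of fun p q => (fderiv ℝ FF fun k' => (prodRev W (Finset.Iic k')).mulVec x)
          (Pi.single k ((Matrix.single p q (1:ℝ)).mulVec x)) := by
    intro k
    ext p q
    show (fderiv ℝ (fun V => FF fun k' => (V k').mulVec x) fun k' => prodRev W (Finset.Iic k'))
        (Pi.single k (Matrix.single p q 1)) = _
    rw [fderiv_wide FF hFF x _, ContinuousLinearMap.comp_apply]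
    show (fderiv ℝ FF fun k' => (prodRev W (Finset.Iic k')).mulVec x)
        (fun k' => ((Pi.single k (Matrix.single p q (1:ℝ)) :
          Fin n → Matrix (Fin d) (Fin d) ℝ) k').mulVec x) = _
    simp only [Matrix.of_apply]
    congr 1
    funext k'
    rcases eq_or_ne k' k with rfl | h
    · simp
    · simp [Pi.single_eq_of_ne h]
  ext a b
  show (fderiv ℝ (fun V => FF fun k' => (prodRev V (Finset.Iic k')).mulVec x) W)
      (Pi.single i (Matrix.single a b 1)) = _
  rw [fderiv_narrow FF hFF x W, ContinuousLinearMap.comp_apply]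
  have hPhi : (DPhi x W) (Pi.single i (Matrix.single a b 1))
      = ∑ k ∈ Finset.Ici i, Pi.single k
          ((prodRev W (Finset.Ioc i k) * Matrix.single a b 1
            * prodRev W (Finset.Iio i)).mulVec x) := by
    funext k'
    rw [DPhi, ContinuousLinearMap.pi_apply, ContinuousLinearMap.comp_apply, mulVecCLM_apply]
    rw [Finset.sum_apply]
    by_cases hik : i ≤ k'
    · have h1 : i ∉ revSort (Finset.Ioc i k') := by simp [revSort]
      have h2 : i ∉ revSort (Finset.Iio i) := by simp [revSort]
      rw [revSort_Iic_split hik, Dl_single_split _ _ h1 h2 W _, ← prodRev_eq, ← prodRev_eq]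
      simp only [Pi.single_apply]
      rw [Finset.sum_ite_eq]
      simp [Finset.mem_Ici, hik]
    · have h0 : i ∉ revSort (Finset.Iic k') := by
        simp only [revSort, List.mem_reverse, Finset.mem_sort, Finset.mem_Iic]
        exact hik
      rw [Dl_single_not_mem _ h0 W _, Matrix.zero_mulVec]
      symm
      simp only [Pi.single_apply]
      rw [Finset.sum_ite_eq]
      simp [Finset.mem_Ici, hik]
  rw [hPhi, map_sum, Matrix.sum_apply]
  refine Finset.sum_congr rfl fun k hk => ?_
  rw [hG k]
  have := key_entry (((fderiv ℝ FF fun k' => (prodRev W (Finset.Iic k')).mulVec x) :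
        (Fin n → (Fin d → ℝ)) →L[ℝ] ℝ).toLinearMap.comp
        (LinearMap.single ℝ (fun _ : Fin n => (Fin d → ℝ)) k))
      (prodRev W (Finset.Ioc i k)) (prodRev W (Finset.Iio i)) x a b
  simp only [LinearMap.comp_apply, LinearMap.single_apply,
    ContinuousLinearMap.coe_coe] at this
  exact this.symm


noncomputable def conjCLM {d : ℕ} (L R : Matrix (Fin d) (Fin d) ℝ) :
    Matrix (Fin d) (Fin d) ℝ →L[ℝ] Matrix (Fin d) (Fin d) ℝ :=
  LinearMap.toContinuousLinearMap
    { toFun := fun A => L * A * R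
      map_add' := fun A B => by beta_reduce; rw [Matrix.mul_add, Matrix.add_mul]
      map_smul' := fun r A => by simp [Matrix.mul_smul, Matrix.smul_mul] }

@[simp] theorem conjCLM_apply {d : ℕ} (L R A : Matrix (Fin d) (Fin d) ℝ) :
    conjCLM L R A = L * A * R := rfl

theorem variance_aux {d : ℕ} {Ω : Type*} [MeasurableSpace Ω] (μ : Measure Ω)
    [IsProbabilityMeasure μ] {ι : Type*} [DecidableEq ι] (s : Finset ι)
    (T : ι → (Matrix (Fin d) (Fin d) ℝ →L[ℝ] Matrix (Fin d) (Fin d) ℝ))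
    (G : ι → Ω → Matrix (Fin d) (Fin d) ℝ) (c σ : ι → ℝ) (N : ℝ)
    (hN : (s.card : ℝ) ≤ N) (hN0 : 0 ≤ N)
    (hT : ∀ k ∈ s, ∀ A, ‖T k A‖ ≤ c k * ‖A‖)
    (hint : ∀ k ∈ s, Integrable (G k) μ)
    (h2int : ∀ k ∈ s, Integrable (fun ω => ‖G k ω - ∫ ω', G k ω' ∂μ‖ ^ 2) μ)
    (hvar : ∀ k ∈ s, ∫ ω, ‖G k ω - ∫ ω', G k ω' ∂μ‖ ^ 2 ∂μ ≤ σ k ^ 2) :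
    ∫ ω, ‖(∑ k ∈ s, T k (G k ω)) - ∫ ω', ∑ k ∈ s, T k (G k ω') ∂μ‖ ^ 2 ∂μ
      ≤ N * ∑ k ∈ s, (c k * σ k) ^ 2 := by
  set m := fun k => ∫ ω', G k ω' ∂μ with hm
  have hmean : (∫ ω', ∑ k ∈ s, T k (G k ω') ∂μ) = ∑ k ∈ s, T k (m k) := by
    rw [integral_finset_sum s (fun k hk => (T k).integrable_comp (hint k hk))]
    exact Finset.sum_congr rfl fun k hk => (T k).integral_comp_comm (hint k hk)
  have hpt : ∀ ω, ‖(∑ k ∈ s, T k (G k ω)) - ∫ ω', ∑ k ∈ s, T k (G k ω') ∂μ‖ ^ 2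
      ≤ N * ∑ k ∈ s, (c k) ^ 2 * ‖G k ω - m k‖ ^ 2 := by
    intro ω
    rw [hmean, ← Finset.sum_sub_distrib]
    have h1 : ‖∑ k ∈ s, (T k (G k ω) - T k (m k))‖ ≤ ∑ k ∈ s, ‖T k (G k ω - m k)‖ := by
      simp_rw [← map_sub]
      exact norm_sum_le _ _
    calc ‖∑ k ∈ s, (T k (G k ω) - T k (m k))‖ ^ 2
        ≤ (∑ k ∈ s, ‖T k (G k ω - m k)‖) ^ 2 := by
          apply pow_le_pow_left₀ (norm_nonneg _) h1
      _ ≤ (s.card : ℝ) * ∑ k ∈ s, ‖T k (G k ω - m k)‖ ^ 2 := sq_sum_le_card_mul_sum_sq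
      _ ≤ N * ∑ k ∈ s, (c k) ^ 2 * ‖G k ω - m k‖ ^ 2 := by
          apply mul_le_mul hN ?_ ?_ hN0
          · apply Finset.sum_le_sum
            intro k hk
            calc ‖T k (G k ω - m k)‖ ^ 2
                ≤ (c k * ‖G k ω - m k‖) ^ 2 := by
                  apply pow_le_pow_left₀ (norm_nonneg _) (hT k hk _)
              _ = c k ^ 2 * ‖G k ω - m k‖ ^ 2 := by ring
          · exact Finset.sum_nonneg fun _ _ => sq_nonneg _
  have hInt2 : Integrable (fun ω => N * ∑ k ∈ s, (c k) ^ 2 * ‖G k ω - m k‖ ^ 2) μ :=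
    (integrable_finset_sum s (fun k hk => ((h2int k hk).const_mul _))).const_mul N
  calc ∫ ω, ‖(∑ k ∈ s, T k (G k ω)) - ∫ ω', ∑ k ∈ s, T k (G k ω') ∂μ‖ ^ 2 ∂μ
      ≤ ∫ ω, N * ∑ k ∈ s, (c k) ^ 2 * ‖G k ω - m k‖ ^ 2 ∂μ :=
        integral_mono_of_nonneg (Filter.Eventually.of_forall fun ω => sq_nonneg _)
          hInt2 (Filter.Eventually.of_forall hpt)
    _ = N * ∑ k ∈ s, c k ^ 2 * ∫ ω, ‖G k ω - m k‖ ^ 2 ∂μ := by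
        rw [MeasureTheory.integral_const_mul, integral_finset_sum s (fun k hk => (h2int k hk).const_mul _)]
        congr 1
        exact Finset.sum_congr rfl fun k hk => MeasureTheory.integral_const_mul _ _
    _ ≤ N * ∑ k ∈ s, c k ^ 2 * σ k ^ 2 := by
        apply mul_le_mul_of_nonneg_left ?_ hN0
        apply Finset.sum_le_sum
        intro k hk
        exact mul_le_mul_of_nonneg_left (hvar k hk) (sq_nonneg _)
    _ = N * ∑ k ∈ s, (c k * σ k) ^ 2 := by
        rw [Finset.sum_congr rfl fun k _ => (mul_pow (c k) (σ k) 2).symm]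

end Aux

theorem gradient_variance_bound {n d : ℕ} (hn : 1 ≤ n) (hd : 1 ≤ d)
    {Ω : Type*} [MeasurableSpace Ω] (μ : Measure Ω) [IsProbabilityMeasure μ]
    (F : Ω → (Fin n → (Fin d → ℝ)) → ℝ) (hF : ∀ ω, Differentiable ℝ (F ω))
    (x : Fin d → ℝ) (W : Fin n → Matrix (Fin d) (Fin d) ℝ) (i : Fin n)
    (σ : Fin n → ℝ)
    -- integrability of the widest-cell block gradients at the effective weights
    (hint : ∀ k ∈ Finset.Ici i,
      Integrable (fun ω => matGrad (fun V => F ω fun k' => (V k').mulVec x)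
        (fun k' => prodRev W (Finset.Iic k')) k) μ)
    -- their squared deviations from the mean are integrable (finite second moments) …
    (h2int : ∀ k ∈ Finset.Ici i,
      Integrable (fun ω =>
        ‖matGrad (fun V => F ω fun k' => (V k').mulVec x)
            (fun k' => prodRev W (Finset.Iic k')) k
          - ∫ ω', matGrad (fun V => F ω' fun k' => (V k').mulVec x)
              (fun k' => prodRev W (Finset.Iic k')) k ∂μ‖ ^ 2) μ)
    -- … and bounded by (σ^{(k)})²
    (hvar : ∀ k ∈ Finset.Ici i,
      ∫ ω, ‖matGrad (fun V => F ω fun k' => (V k').mulVec x)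
            (fun k' => prodRev W (Finset.Iic k')) k
          - ∫ ω', matGrad (fun V => F ω' fun k' => (V k').mulVec x)
              (fun k' => prodRev W (Finset.Iic k')) k ∂μ‖ ^ 2 ∂μ ≤ σ k ^ 2) :
    ∫ ω, ‖matGrad (fun V => F ω fun k' => (prodRev V (Finset.Iic k')).mulVec x) W i
        - ∫ ω', matGrad (fun V => F ω' fun k' => (prodRev V (Finset.Iic k')).mulVec x) W i ∂μ‖ ^ 2 ∂μ
      ≤ (n : ℝ) * ∑ k ∈ Finset.Ici i,
          ((∏ j ∈ Finset.Iio i, ‖W j‖) * (∏ j ∈ Finset.Ioc i k, ‖W j‖) * σ k) ^ 2 := by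
  
  classical
  have hexp : ∀ ω, matGrad (fun V => F ω fun k' => (prodRev V (Finset.Iic k')).mulVec x) W i
      = ∑ k ∈ Finset.Ici i,
          (conjCLM (prodRev W (Finset.Ioc i k))ᵀ (prodRev W (Finset.Iio i))ᵀ)
            (matGrad (fun V => F ω fun k' => (V k').mulVec x)
              (fun k' => prodRev W (Finset.Iic k')) k) := by
    intro ω
    rw [matGrad_narrow (F ω) (hF ω) x W i]
    exact Finset.sum_congr rfl fun k _ => rfl
  simp only [hexp]
  refine variance_aux μ (Finset.Ici i)
    (fun k => conjCLM (prodRev W (Finset.Ioc i k))ᵀ (prodRev W (Finset.Iio i))ᵀ)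
    (fun k ω => matGrad (fun V => F ω fun k' => (V k').mulVec x)
      (fun k' => prodRev W (Finset.Iic k')) k)
    (fun k => (∏ j ∈ Finset.Iio i, ‖W j‖) * (∏ j ∈ Finset.Ioc i k, ‖W j‖)) σ n
    ?_ ?_ ?_ hint h2int hvar
  · calc ((Finset.Ici i).card : ℝ) ≤ ((Finset.univ (α := Fin n)).card : ℝ) := by
          exact_mod_cast Finset.card_le_univ (Finset.Ici i)
      _ = n := by simp
  · exact Nat.cast_nonneg n
  · intro k hk A
    have hL : ‖(prodRev W (Finset.Ioc i k))ᵀ‖ ≤ ∏ j ∈ Finset.Ioc i k, ‖W j‖ := by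
      rw [norm_transpose']; exact norm_prodRev_le hd W _
    have hR : ‖(prodRev W (Finset.Iio i))ᵀ‖ ≤ ∏ j ∈ Finset.Iio i, ‖W j‖ := by
      rw [norm_transpose']; exact norm_prodRev_le hd W _
    have hIoc : (0:ℝ) ≤ ∏ j ∈ Finset.Ioc i k, ‖W j‖ :=
      Finset.prod_nonneg fun _ _ => norm_nonneg _
    calc ‖conjCLM (prodRev W (Finset.Ioc i k))ᵀ (prodRev W (Finset.Iio i))ᵀ A‖
        = ‖(prodRev W (Finset.Ioc i k))ᵀ * A * (prodRev W (Finset.Iio i))ᵀ‖ := rfl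
      _ ≤ ‖(prodRev W (Finset.Ioc i k))ᵀ * A‖ * ‖(prodRev W (Finset.Iio i))ᵀ‖ := norm_mul_le _ _
      _ ≤ (‖(prodRev W (Finset.Ioc i k))ᵀ‖ * ‖A‖) * ‖(prodRev W (Finset.Iio i))ᵀ‖ :=
          mul_le_mul_of_nonneg_right (norm_mul_le _ _) (norm_nonneg _)
      _ ≤ ((∏ j ∈ Finset.Ioc i k, ‖W j‖) * ‖A‖) * (∏ j ∈ Finset.Iio i, ‖W j‖) := by
          apply mul_le_mul (mul_le_mul_of_nonneg_right hL (norm_nonneg _)) hR (norm_nonneg _)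
          exact mul_nonneg hIoc (norm_nonneg _)
      _ = ((∏ j ∈ Finset.Iio i, ‖W j‖) * (∏ j ∈ Finset.Ioc i k, ‖W j‖)) * ‖A‖ := by ring
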